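/- Trace inequality for second derivatives of eigenvalues (Lemma 5.1): Let n ∈ ℕ, let I ⊆ ℝ be an open interval, and for each s ∈ I let T(s) be an n×n Hermitian matrix. Assume there exist twice continuously differentiable maps τ_α : I → ℝ and u_α : I → ℂⁿ (α = 1,…,n) such that for every s ∈ I the vectors u₁(s),…,u_n(s) form an orthonormal basis of ℂⁿ and T(s) = Σ_α τ_α(s) |u_α(s)⟩⟨u_α(s)|. Let F : ℝ → ℝ be monotone nondecreasing. Then for every s ∈ I: Tr( T''(s) · F(T(s)) ) ≤ Σ_{α=1}^n τ_α''(s) F(τ_α(s)), where T''(s) is the entrywise second derivative and F(T(s)) := Σ_β F(τ_β(s)) |u_β(s)⟩⟨u_β(s)|. -/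

import Mathlib

open scoped ComplexOrder

noncomputable section

/-- The rank-one matrix `|u⟩⟨u|` associated to a vector `u ∈ ℂⁿ`. -/
def rankOneMat {n : ℕ} (u : Fin n → ℂ) : Matrix (Fin n) (Fin n) ℂ :=
  Matrix.of fun i j => u i * (starRingEnd ℂ) (u j)

private lemma c2_hasDerivAt {E : Type*} [NormedAddCommGroup E] [NormedSpace ℝ E]
    {f : ℝ → E} {I : Set ℝ} (hI : IsOpen I) (hf : ContDiffOn ℝ 2 f I) :
    (∀ t ∈ I, HasDerivAt f (deriv f t) t) ∧
      ∀ t ∈ I, HasDerivAt (deriv f) (deriv (deriv f) t) t := by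
  have hd1 : ContDiffOn ℝ 1 (deriv f) I := hf.deriv_of_isOpen hI (by norm_num)
  refine ⟨fun t ht => ?_, fun t ht => ?_⟩
  · exact ((hf.differentiableOn (by norm_num)).differentiableAt (hI.mem_nhds ht)).hasDerivAt
  · exact ((hd1.differentiableOn one_ne_zero).differentiableAt (hI.mem_nhds ht)).hasDerivAt

private lemma derivAt_zero_of_eqOn {f : ℝ → ℂ} {g : ℂ} {I : Set ℝ} (hI : IsOpen I)
    {t : ℝ} (ht : t ∈ I) (hf : ∀ r ∈ I, f r = g) {a : ℂ} (h : HasDerivAt f a t) : a = 0 :=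
  (h.congr_of_eventuallyEq
      ((Filter.eventuallyEq_of_mem (hI.mem_nhds ht) hf).symm :
        (fun _ => g) =ᶠ[nhds t] f)).unique (hasDerivAt_const t g)

private lemma rankpair {n : ℕ} (c d : ℂ) (X Y v : Fin n → ℂ) :
    ∑ i, ∑ j, (c * (X i * star (Y j))) * (d * (v j * star (v i)))
      = c * d * ((∑ i, star (v i) * X i) * (∑ j, star (Y j) * v j)) := by
  rw [Finset.sum_mul_sum]
  simp only [Finset.mul_sum]
  exact Finset.sum_congr rfl fun i _ => Finset.sum_congr rfl fun j _ => by ring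

private lemma double_expand {n : ℕ} (K L : Fin n → Fin n → Fin n → ℂ) :
    ∑ i, ∑ j, (∑ α, K α i j) * (∑ β, L β i j)
      = ∑ α, ∑ β, ∑ i, ∑ j, K α i j * L β i j := by
  simp only [Finset.sum_mul_sum]
  calc (∑ i, ∑ j, ∑ α, ∑ β, K α i j * L β i j)
      = ∑ i, ∑ α, ∑ j, ∑ β, K α i j * L β i j :=
        Finset.sum_congr rfl fun i _ => Finset.sum_comm ..
    _ = ∑ α, ∑ i, ∑ j, ∑ β, K α i j * L β i j := Finset.sum_comm ..
    _ = ∑ α, ∑ i, ∑ β, ∑ j, K α i j * L β i j :=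
        Finset.sum_congr rfl fun α _ => Finset.sum_congr rfl fun i _ => Finset.sum_comm ..
    _ = ∑ α, ∑ β, ∑ i, ∑ j, K α i j * L β i j :=
        Finset.sum_congr rfl fun α _ => Finset.sum_comm ..

/-- Trace inequality for second derivatives of eigenvalues: if `T(s)` is a smoothly
diagonalized Hermitian family, `T(s) = Σ_α τ_α(s) |u_α(s)⟩⟨u_α(s)|` with orthonormal
`u_α(s)` and `C²` data, and `F` is monotone nondecreasing, then
`Tr(T''(s) F(T(s))) ≤ Σ_α τ_α''(s) F(τ_α(s))`. -/
theorem stmt3 (n : ℕ) (I : Set ℝ) (hIopen : IsOpen I) (hIconn : I.OrdConnected)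
    (T : ℝ → Matrix (Fin n) (Fin n) ℂ)
    (hHerm : ∀ s ∈ I, (T s).IsHermitian)
    (τ : Fin n → ℝ → ℝ) (u : Fin n → ℝ → (Fin n → ℂ))
    (hτ : ∀ α, ContDiffOn ℝ 2 (τ α) I)
    (hu : ∀ α, ContDiffOn ℝ 2 (u α) I)
    (honb : ∀ s ∈ I, ∀ α β,
      (∑ i, (starRingEnd ℂ) (u α s i) * u β s i) = if α = β then 1 else 0)
    (hdecomp : ∀ s ∈ I, T s = ∑ α, (τ α s : ℂ) • rankOneMat (u α s))
    (F : ℝ → ℝ) (hF : Monotone F) (s : ℝ) (hs : s ∈ I) :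
    Matrix.trace
        ((Matrix.of fun i j => deriv (fun t => deriv (fun r => T r i j) t) s) *
          (∑ β, (F (τ β s) : ℂ) • rankOneMat (u β s)))
      ≤ ((∑ α, deriv (deriv (τ α)) s * F (τ α s) : ℝ) : ℂ) := by
  classical
  -- abbreviations
  obtain ⟨dP, hdPdef⟩ : ∃ dP : Fin n → Fin n → ℝ → ℂ,
      dP = fun α i => deriv (fun r => u α r i) := ⟨_, rfl⟩
  obtain ⟨zv, hzvdef⟩ : ∃ zv : Fin n → Fin n → ℂ,
      zv = fun α i => deriv (dP α i) s := ⟨_, rfl⟩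
  obtain ⟨wv, hwvdef⟩ : ∃ wv : Fin n → Fin n → ℂ,
      wv = fun α i => dP α i s := ⟨_, rfl⟩
  obtain ⟨dτ, hdτdef⟩ : ∃ dτ : Fin n → ℝ → ℝ, dτ = fun α => deriv (τ α) := ⟨_, rfl⟩
  obtain ⟨ddτ, hddτdef⟩ : ∃ ddτ : Fin n → ℝ, ddτ = fun α => deriv (deriv (τ α)) s := ⟨_, rfl⟩
  -- basic derivative facts
  have hP1 : ∀ α i, ∀ t ∈ I, HasDerivAt (fun r => u α r i) (dP α i t) t := by
    intro α i t ht
    rw [hdPdef]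
    exact (c2_hasDerivAt hIopen (contDiffOn_pi.mp (hu α) i)).1 t ht
  have hP2 : ∀ α i, HasDerivAt (dP α i) (zv α i) s := by
    intro α i
    rw [hzvdef, hdPdef]
    exact (c2_hasDerivAt hIopen (contDiffOn_pi.mp (hu α) i)).2 s hs
  have hτ1 : ∀ α, ∀ t ∈ I, HasDerivAt (τ α) (dτ α t) t := by
    intro α t ht
    rw [hdτdef]
    exact (c2_hasDerivAt hIopen (hτ α)).1 t ht
  have hτ2 : ∀ α, HasDerivAt (dτ α) (ddτ α) s := by
    intro α
    rw [hddτdef, hdτdef]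
    exact (c2_hasDerivAt hIopen (hτ α)).2 s hs
  have honb' : ∀ t ∈ I, ∀ α β,
      (∑ i, star (u α t i) * u β t i) = if α = β then 1 else 0 := by
    intro t ht α β
    simpa only [starRingEnd_apply] using honb t ht α β
  -- first derivative of orthonormality
  have hR2 : ∀ t ∈ I, ∀ α β,
      (∑ i, (star (dP α i t) * u β t i + star (u α t i) * dP β i t)) = 0 := by
    intro t ht α β
    have hG : HasDerivAt (fun r => ∑ i, star (u α r i) * u β r i)
        (∑ i, (star (dP α i t) * u β t i + star (u α t i) * dP β i t)) t :=
      HasDerivAt.fun_sum fun i _ => ((hP1 α i t ht).star.mul (hP1 β i t ht))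
    exact derivAt_zero_of_eqOn hIopen ht (fun r hr => honb' r hr α β) hG
  -- second derivative of orthonormality
  have hR3 : ∀ α β,
      (∑ i, ((star (zv α i) * u β s i + star (dP α i s) * dP β i s)
          + (star (dP α i s) * dP β i s + star (u α s i) * zv β i))) = 0 := by
    intro α β
    have hG : HasDerivAt (fun r => ∑ i, (star (dP α i r) * u β r i + star (u α r i) * dP β i r))
        (∑ i, ((star (zv α i) * u β s i + star (dP α i s) * dP β i s)
          + (star (dP α i s) * dP β i s + star (u α s i) * zv β i))) s :=
      HasDerivAt.fun_sum fun i _ =>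
        (((hP2 α i).star.mul (hP1 β i s hs)).add ((hP1 α i s hs).star.mul (hP2 β i)))
    exact derivAt_zero_of_eqOn hIopen hs (fun r hr => hR2 r hr α β) hG
  -- completeness of the orthonormal system
  have hcomp : ∀ i j, (∑ α, u α s i * star (u α s j)) = if i = j then 1 else 0 := by
    have hU : (Matrix.of fun α i => star (u α s i)) *
        (Matrix.of fun α i => star (u α s i)).conjTranspose = 1 := by
      ext α β
      simp only [Matrix.mul_apply, Matrix.conjTranspose_apply, Matrix.of_apply, star_star,
        Matrix.one_apply]
      exact honb' s hs α β
    have hU2 := mul_eq_one_comm.mp hU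
    intro i j
    have h : ((Matrix.of fun α i => star (u α s i)).conjTranspose *
        (Matrix.of fun α i => star (u α s i))) i j = (1 : Matrix (Fin n) (Fin n) ℂ) i j := by
      rw [hU2]
    simpa only [Matrix.mul_apply, Matrix.conjTranspose_apply, Matrix.of_apply, star_star,
      Matrix.one_apply] using h
  -- Parseval-type identity
  have hPars : ∀ x y : Fin n → ℂ,
      (∑ α, (∑ i, star (x i) * u α s i) * (∑ j, star (u α s j) * y j))
        = ∑ i, star (x i) * y i := by
    intro x y
    calc (∑ α, (∑ i, star (x i) * u α s i) * (∑ j, star (u α s j) * y j))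
        = ∑ α, ∑ i, ∑ j, (star (x i) * u α s i) * (star (u α s j) * y j) := by
          exact Finset.sum_congr rfl fun α _ => Finset.sum_mul_sum ..
      _ = ∑ i, ∑ j, (star (x i) * y j) * ∑ α, (u α s i * star (u α s j)) := by
          rw [Finset.sum_comm]
          refine Finset.sum_congr rfl fun i _ => ?_
          rw [Finset.sum_comm]
          refine Finset.sum_congr rfl fun j _ => ?_
          rw [Finset.mul_sum]
          exact Finset.sum_congr rfl fun α _ => by ring
      _ = ∑ i, star (x i) * y i := by
          refine Finset.sum_congr rfl fun i _ => ?_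
          simp only [hcomp, mul_ite, mul_one, mul_zero, Finset.sum_ite_eq, Finset.mem_univ,
            if_true]
  -- entrywise formula for T on I
  have hTentry : ∀ i j, ∀ r ∈ I,
      T r i j = ∑ α, (τ α r : ℂ) * (u α r i * star (u α r j)) := by
    intro i j r hr
    rw [hdecomp r hr]
    simp only [Matrix.sum_apply, Matrix.smul_apply, rankOneMat, Matrix.of_apply,
      smul_eq_mul, starRingEnd_apply]
  -- first derivative of the entries
  obtain ⟨g1, hg1def⟩ : ∃ g1 : Fin n → Fin n → ℝ → ℂ,
      g1 = fun i j t => ∑ α, (((dτ α t : ℝ) : ℂ) * (u α t i * star (u α t j))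
        + (τ α t : ℂ) * (dP α i t * star (u α t j) + u α t i * star (dP α j t))) := ⟨_, rfl⟩
  have hg1 : ∀ i j, ∀ t ∈ I,
      HasDerivAt (fun r => ∑ α, (τ α r : ℂ) * (u α r i * star (u α r j))) (g1 i j t) t := by
    intro i j t ht
    rw [hg1def]
    exact HasDerivAt.fun_sum fun α _ =>
      ((hτ1 α t ht).ofReal_comp.mul ((hP1 α i t ht).mul (hP1 α j t ht).star))
  have hderiv1 : ∀ i j, ∀ t ∈ I, deriv (fun r => T r i j) t = g1 i j t := by
    intro i j t ht
    have hev : (fun r => T r i j)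
        =ᶠ[nhds t] fun r => ∑ α, (τ α r : ℂ) * (u α r i * star (u α r j)) :=
      Filter.eventuallyEq_of_mem (hIopen.mem_nhds ht) fun r hr => hTentry i j r hr
    rw [hev.deriv_eq]
    exact (hg1 i j t ht).deriv
  -- second derivative of the entries
  obtain ⟨G2, hG2def⟩ : ∃ G2 : Fin n → Fin n → ℂ,
      G2 = fun i j => ∑ α,
        ((((ddτ α : ℝ) : ℂ) * (u α s i * star (u α s j))
            + ((dτ α s : ℝ) : ℂ) * (dP α i s * star (u α s j) + u α s i * star (dP α j s)))
          + (((dτ α s : ℝ) : ℂ) * (dP α i s * star (u α s j) + u α s i * star (dP α j s))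
            + (τ α s : ℂ) * ((zv α i * star (u α s j) + dP α i s * star (dP α j s))
              + (dP α i s * star (dP α j s) + u α s i * star (zv α j))))) := ⟨_, rfl⟩
  have hg2 : ∀ i j, HasDerivAt (g1 i j) (G2 i j) s := by
    intro i j
    rw [hg1def, hG2def]
    exact HasDerivAt.fun_sum fun α _ =>
      ((hτ2 α).ofReal_comp.mul ((hP1 α i s hs).mul (hP1 α j s hs).star)).add
        ((hτ1 α s hs).ofReal_comp.mul
          (((hP2 α i).mul (hP1 α j s hs).star).add ((hP1 α i s hs).mul (hP2 α j).star)))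
  have hderiv2 : ∀ i j, deriv (fun t => deriv (fun r => T r i j) t) s = G2 i j := by
    intro i j
    have hev : (fun t => deriv (fun r => T r i j) t) =ᶠ[nhds s] g1 i j :=
      Filter.eventuallyEq_of_mem (hIopen.mem_nhds hs) fun t ht => hderiv1 i j t ht
    rw [hev.deriv_eq]
    exact (hg2 i j).deriv
  -- the flattened rank-one decomposition of the second derivative matrix
  obtain ⟨K, hKdef⟩ : ∃ K : Fin n → Fin n → Fin n → ℂ,
      K = fun α i j =>
        ((ddτ α : ℝ) : ℂ) * (u α s i * star (u α s j))
        + (2 * ((dτ α s : ℝ) : ℂ)) * (dP α i s * star (u α s j))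
        + (2 * ((dτ α s : ℝ) : ℂ)) * (u α s i * star (dP α j s))
        + (τ α s : ℂ) * (zv α i * star (u α s j))
        + (2 * (τ α s : ℂ)) * (dP α i s * star (dP α j s))
        + (τ α s : ℂ) * (u α s i * star (zv α j)) := ⟨_, rfl⟩
  obtain ⟨L, hLdef⟩ : ∃ L : Fin n → Fin n → Fin n → ℂ,
      L = fun β i j => (F (τ β s) : ℂ) * (u β s j * star (u β s i)) := ⟨_, rfl⟩
  have hKG2 : ∀ i j, G2 i j = ∑ α, K α i j := by
    intro i j
    simp only [hG2def, hKdef]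
    exact Finset.sum_congr rfl fun α _ => by ring
  have htrace : Matrix.trace
        ((Matrix.of fun i j => deriv (fun t => deriv (fun r => T r i j) t) s) *
          (∑ β, (F (τ β s) : ℂ) • rankOneMat (u β s)))
      = ∑ α, ∑ β, ∑ i, ∑ j, K α i j * L β i j := by
    rw [← double_expand K L]
    simp only [Matrix.trace, Matrix.diag, Matrix.mul_apply, Matrix.sum_apply,
      Matrix.smul_apply, rankOneMat, Matrix.of_apply, smul_eq_mul, starRingEnd_apply, hLdef]
    refine Finset.sum_congr rfl fun i _ => ?_
    refine Finset.sum_congr rfl fun j _ => ?_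
    rw [hderiv2 i j, hKG2 i j]
  -- evaluate each (α,β) block
  have hpair : ∀ α β, (∑ i, ∑ j, K α i j * L β i j) =
      2 * (τ α s : ℂ) * (F (τ β s) : ℂ) *
          ((∑ i, star (u β s i) * dP α i s) * (∑ j, star (dP α j s) * u β s j))
        + (if α = β then (F (τ α s) : ℂ) * (((ddτ α : ℝ) : ℂ)
            + 2 * ((dτ α s : ℝ) : ℂ) * ((∑ i, star (u α s i) * dP α i s)
                + (∑ i, star (dP α i s) * u α s i))
            + (τ α s : ℂ) * ((∑ i, star (u α s i) * zv α i)
                + (∑ i, star (zv α i) * u α s i))) else 0) := by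
    intro α β
    simp only [hKdef, hLdef, add_mul, Finset.sum_add_distrib]
    rw [rankpair, rankpair, rankpair, rankpair, rankpair, rankpair,
      honb' s hs α β, honb' s hs β α]
    by_cases h : α = β
    · subst h
      simp only [if_pos rfl, eq_self_iff_true, if_true]
      ring
    · simp only [if_neg h, if_neg (Ne.symm h)]
      ring
  -- named quantities
  obtain ⟨Nr, hNrdef⟩ : ∃ Nr : Fin n → Fin n → ℝ,
      Nr = fun β α => Complex.normSq (∑ i, star (u β s i) * dP α i s) := ⟨_, rfl⟩
  -- star-swap for the cross inner products
  have hq : ∀ α β, (∑ j, star (dP α j s) * u β s j)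
      = star (∑ i, star (u β s i) * dP α i s) := by
    intro α β
    rw [star_sum]
    exact Finset.sum_congr rfl fun i _ => by rw [star_mul', star_star]; ring
  -- split forms of the derivative relations
  have hsplitR2 : ∀ α β, (∑ i, star (dP α i s) * u β s i)
      + (∑ i, star (u α s i) * dP β i s) = 0 := by
    intro α β
    rw [← Finset.sum_add_distrib]
    exact hR2 s hs α β
  have hsplitR3 : ∀ α, ((∑ i, star (zv α i) * u α s i) + (∑ i, star (dP α i s) * dP α i s))
      + ((∑ i, star (dP α i s) * dP α i s) + (∑ i, star (u α s i) * zv α i)) = 0 := by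
    intro α
    rw [← Finset.sum_add_distrib, ← Finset.sum_add_distrib, ← Finset.sum_add_distrib]
    exact hR3 α α
  -- Parseval for the derivative vectors
  have hee : ∀ α, (∑ i, star (dP α i s) * dP α i s) = ∑ β, ((Nr β α : ℝ) : ℂ) := by
    intro α
    rw [← hPars (fun i => dP α i s) (fun i => dP α i s)]
    refine Finset.sum_congr rfl fun β _ => ?_
    simp only [hNrdef]
    rw [hq α β, Complex.star_def, mul_comm, Complex.mul_conj]
  -- assemble the trace as an explicit complex expression
  have htrace2 : (∑ α, ∑ β, ∑ i, ∑ j, K α i j * L β i j)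
      = ∑ α, ((F (τ α s) : ℂ) * ((ddτ α : ℝ) : ℂ)
          + ∑ β, (2 * (τ α s : ℂ) * ((F (τ β s) : ℂ) - (F (τ α s) : ℂ)) * ((Nr β α : ℝ) : ℂ))) := by
    refine Finset.sum_congr rfl fun α _ => ?_
    have hmain : ∀ β, (∑ i, ∑ j, K α i j * L β i j)
        = 2 * (τ α s : ℂ) * (F (τ β s) : ℂ) * ((Nr β α : ℝ) : ℂ)
          + (if α = β then (F (τ α s) : ℂ) * (((ddτ α : ℝ) : ℂ)
              + 2 * ((dτ α s : ℝ) : ℂ) * ((∑ i, star (u α s i) * dP α i s)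
                  + (∑ i, star (dP α i s) * u α s i))
              + (τ α s : ℂ) * ((∑ i, star (u α s i) * zv α i)
                  + (∑ i, star (zv α i) * u α s i))) else 0) := by
      intro β
      rw [hpair α β, hq α β]
      simp only [hNrdef]
      rw [Complex.star_def, Complex.mul_conj]
    calc (∑ β, ∑ i, ∑ j, K α i j * L β i j)
        = ∑ β, (2 * (τ α s : ℂ) * (F (τ β s) : ℂ) * ((Nr β α : ℝ) : ℂ)
            + (if α = β then (F (τ α s) : ℂ) * (((ddτ α : ℝ) : ℂ)
                + 2 * ((dτ α s : ℝ) : ℂ) * ((∑ i, star (u α s i) * dP α i s)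
                    + (∑ i, star (dP α i s) * u α s i))
                + (τ α s : ℂ) * ((∑ i, star (u α s i) * zv α i)
                    + (∑ i, star (zv α i) * u α s i))) else 0)) :=
          Finset.sum_congr rfl fun β _ => hmain β
      _ = (∑ β, 2 * (τ α s : ℂ) * (F (τ β s) : ℂ) * ((Nr β α : ℝ) : ℂ))
            + (F (τ α s) : ℂ) * (((ddτ α : ℝ) : ℂ)
              + 2 * ((dτ α s : ℝ) : ℂ) * ((∑ i, star (u α s i) * dP α i s)
                  + (∑ i, star (dP α i s) * u α s i))
              + (τ α s : ℂ) * ((∑ i, star (u α s i) * zv α i)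
                  + (∑ i, star (zv α i) * u α s i))) := by
          rw [Finset.sum_add_distrib, Finset.sum_ite_eq, if_pos (Finset.mem_univ α)]
      _ = (F (τ α s) : ℂ) * ((ddτ α : ℝ) : ℂ)
            + ∑ β, (2 * (τ α s : ℂ) * ((F (τ β s) : ℂ) - (F (τ α s) : ℂ))
                * ((Nr β α : ℝ) : ℂ)) := by
          have hz1 : (∑ i, star (u α s i) * dP α i s) + (∑ i, star (dP α i s) * u α s i)
              = 0 := by linear_combination hsplitR2 α α
          have hz2 : (∑ i, star (u α s i) * zv α i) + (∑ i, star (zv α i) * u α s i)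
              = -2 * ∑ β, ((Nr β α : ℝ) : ℂ) := by
            linear_combination hsplitR3 α - 2 * hee α
          rw [hz1, hz2]
          have e1 : ∑ β, (2 * (τ α s : ℂ) * ((F (τ β s) : ℂ) - (F (τ α s) : ℂ))
                * ((Nr β α : ℝ) : ℂ))
              = (∑ β, 2 * (τ α s : ℂ) * (F (τ β s) : ℂ) * ((Nr β α : ℝ) : ℂ))
                - (F (τ α s) : ℂ) * (2 * (τ α s : ℂ) * ∑ β, ((Nr β α : ℝ) : ℂ)) := by
            rw [Finset.mul_sum, Finset.mul_sum, ← Finset.sum_sub_distrib]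
            exact Finset.sum_congr rfl fun β _ => by ring
          rw [e1]
          ring
  -- symmetry and nonnegativity of the coupling coefficients
  have hNsym : ∀ α β, Nr α β = Nr β α := by
    intro α β
    have e : star (∑ i, star (u β s i) * dP α i s) = -(∑ i, star (u α s i) * dP β i s) := by
      linear_combination hsplitR2 α β - hq α β
    simp only [hNrdef]
    rw [show (∑ i, star (u α s i) * dP β i s) = -star (∑ i, star (u β s i) * dP α i s) from by
      linear_combination e]
    rw [Complex.normSq_neg, Complex.star_def, Complex.normSq_conj]
  have hNpos : ∀ β α, 0 ≤ Nr β α := by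
    intro β α
    simp only [hNrdef]
    exact Complex.normSq_nonneg _
  obtain ⟨tt, httdef⟩ : ∃ tt : Fin n → Fin n → ℝ,
      tt = fun α β => 2 * τ α s * (F (τ β s) - F (τ α s)) * Nr β α := ⟨_, rfl⟩
  have hterm : ∀ α β, tt α β + tt β α ≤ 0 := by
    intro α β
    simp only [httdef]
    rw [hNsym α β]
    rcases le_total (τ α s) (τ β s) with h | h
    · nlinarith [mul_nonneg (mul_nonneg (hNpos β α) (sub_nonneg.2 (hF h))) (sub_nonneg.2 h)]
    · nlinarith [mul_nonneg (mul_nonneg (hNpos β α) (sub_nonneg.2 (hF h))) (sub_nonneg.2 h)]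
  have hcross : (∑ α, ∑ β, tt α β) ≤ 0 := by
    have hflip : (∑ α, ∑ β, tt α β) = ∑ α, ∑ β, tt β α := Finset.sum_comm ..
    have h2 : (∑ α, ∑ β, tt α β) + (∑ α, ∑ β, tt α β)
        = ∑ α, ∑ β, (tt α β + tt β α) := by
      nth_rewrite 2 [hflip]
      rw [← Finset.sum_add_distrib]
      exact Finset.sum_congr rfl fun α _ => (Finset.sum_add_distrib).symm
    have h3 : (∑ α, ∑ β, (tt α β + tt β α)) ≤ 0 :=
      Finset.sum_nonpos fun α _ => Finset.sum_nonpos fun β _ => hterm α β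
    linarith
  -- conclusion
  rw [htrace, htrace2]
  have hLreal : (∑ α, ((F (τ α s) : ℂ) * ((ddτ α : ℝ) : ℂ)
        + ∑ β, (2 * (τ α s : ℂ) * ((F (τ β s) : ℂ) - (F (τ α s) : ℂ)) * ((Nr β α : ℝ) : ℂ))))
      = ((∑ α, (F (τ α s) * ddτ α + ∑ β, 2 * τ α s * (F (τ β s) - F (τ α s)) * Nr β α) : ℝ) : ℂ) := by
    push_cast
    rfl
  rw [hLreal, Complex.real_le_real]
  have hsplit : (∑ α, (F (τ α s) * ddτ α + ∑ β, 2 * τ α s * (F (τ β s) - F (τ α s)) * Nr β α))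
      = (∑ α, F (τ α s) * ddτ α) + ∑ α, ∑ β, tt α β := by
    rw [Finset.sum_add_distrib]
    simp only [httdef]
  rw [hsplit]
  have heq : (∑ α, F (τ α s) * ddτ α) = ∑ α, deriv (deriv (τ α)) s * F (τ α s) := by
    simp only [hddτdef]
    exact Finset.sum_congr rfl fun α _ => by ring
  linarith [hcross, le_of_eq heq]
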